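/- In the multinomial choice model with choicewise utilities U_j = X_j'β + ε_j, if the joint distribution of (ε₁,…,ε_K) conditional on X is exchangeable with an everywhere positive joint density on ℝ^K for almost every X, then for any pair of choices s ≠ t: X_s'β > X_t'β ⟺ P(Y = s|X) > P(Y = t|X), where Y is the utility-maximizing choice. -/

import Mathlib

open MeasureTheory Set

/-- Conditional expectation of `f` given the σ-algebra generated by the random element `X`. -/
noncomputable def condExpGiven {Ω 𝓧 : Type*} [MeasurableSpace Ω] [MeasurableSpace 𝓧]
    (μ : Measure Ω) (X : Ω → 𝓧) (f : Ω → ℝ) : Ω → ℝ :=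
  μ[f | MeasurableSpace.comap X inferInstance]

namespace MultChoiceAux

variable {K : ℕ}

def choiceSet (c : Fin K → ℝ) (k : Fin K) : Set (Fin K → ℝ) :=
  {e | ∀ j, j ≠ k → c j + e j < c k + e k}

lemma choiceSet_eq (c : Fin K → ℝ) (k : Fin K) :
    choiceSet c k = ⋂ j, ⋂ (_ : j ≠ k), {e : Fin K → ℝ | c j + e j < c k + e k} := by
  ext e; simp [choiceSet]

lemma measurableSet_choiceSet (c : Fin K → ℝ) (k : Fin K) :
    MeasurableSet (choiceSet c k) := by
  rw [choiceSet_eq]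
  exact MeasurableSet.iInter fun j => MeasurableSet.iInter fun _ =>
    measurableSet_lt (measurable_const.add (measurable_pi_apply j))
      (measurable_const.add (measurable_pi_apply k))

lemma isOpen_choiceSet (c : Fin K → ℝ) (k : Fin K) : IsOpen (choiceSet c k) := by
  rw [choiceSet_eq]
  exact isOpen_iInter_of_finite fun j => isOpen_iInter_of_finite fun _ =>
    isOpen_lt (continuous_const.add (continuous_apply j))
      (continuous_const.add (continuous_apply k))

lemma preimage_swap_choiceSet (c : Fin K → ℝ) {s t : Fin K} (hst : s ≠ t) (e : Fin K → ℝ) :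
    e ∘ (Equiv.swap s t) ∈ choiceSet c t ↔
      (c s + e t < c t + e s ∧ ∀ j, j ≠ s → j ≠ t → c j + e j < c t + e s) := by
  constructor
  · intro h
    refine ⟨?_, fun j hjs hjt => ?_⟩
    · have := h s hst
      simpa [Equiv.swap_apply_left, Equiv.swap_apply_right] using this
    · have := h j hjt
      simpa [Equiv.swap_apply_of_ne_of_ne hjs hjt, Equiv.swap_apply_right] using this
  · rintro ⟨h1, h2⟩ j hjt
    rcases eq_or_ne j s with rfl | hjs
    · simpa [Equiv.swap_apply_left, Equiv.swap_apply_right] using h1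
    · simpa [Equiv.swap_apply_of_ne_of_ne hjs hjt, Equiv.swap_apply_right] using h2 j hjs hjt

lemma nu_swap (ν : Measure (Fin K → ℝ)) {g : (Fin K → ℝ) → ℝ}
    (hexch : ∀ σ : Equiv.Perm (Fin K), ∀ e, g (e ∘ σ) = g e)
    (hν : ∀ S : Set (Fin K → ℝ), MeasurableSet S → ν S = ∫⁻ e in S, ENNReal.ofReal (g e))
    (σ : Equiv.Perm (Fin K)) {S : Set (Fin K → ℝ)} (hS : MeasurableSet S) :
    ν S = ν ((fun e => e ∘ σ) ⁻¹' S) := by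
  set Φ : (Fin K → ℝ) ≃ᵐ (Fin K → ℝ) := MeasurableEquiv.piCongrLeft (fun _ => ℝ) σ.symm
  have hΦ : ∀ e : Fin K → ℝ, Φ e = e ∘ σ := by
    intro e; funext j; simp [Φ, MeasurableEquiv.piCongrLeft, Equiv.piCongrLeft_apply]
  have hmp : MeasurePreserving Φ volume volume :=
    volume_measurePreserving_piCongrLeft (fun _ => ℝ) σ.symm
  have hpre : (fun e => e ∘ σ) ⁻¹' S = Φ ⁻¹' S := by
    ext e; simp [hΦ e]
  rw [hν S hS, hpre, hν (Φ ⁻¹' S) (Φ.measurable hS)]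
  rw [← hmp.setLIntegral_comp_preimage_emb Φ.measurableEmbedding
    (fun e => ENNReal.ofReal (g e)) S]
  refine setLIntegral_congr_fun (Φ.measurable hS) (fun e _ => ?_)
  rw [hΦ e, hexch σ e]

/-- equality case -/
lemma nu_eq (ν : Measure (Fin K → ℝ)) {c : Fin K → ℝ} {g : (Fin K → ℝ) → ℝ}
    (hexch : ∀ σ : Equiv.Perm (Fin K), ∀ e, g (e ∘ σ) = g e)
    (hν : ∀ S : Set (Fin K → ℝ), MeasurableSet S → ν S = ∫⁻ e in S, ENNReal.ofReal (g e))
    {s t : Fin K} (hst : s ≠ t) (hc : c s = c t) :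
    ν (choiceSet c s) = ν (choiceSet c t) := by
  rw [nu_swap ν hexch hν (Equiv.swap s t) (measurableSet_choiceSet c t)]
  congr 1
  ext e
  rw [mem_preimage, preimage_swap_choiceSet c hst e]
  constructor
  · intro h
    refine ⟨by linarith [h t hst.symm], fun j hjs hjt => by linarith [h j hjs]⟩
  · intro h j hjs
    rcases eq_or_ne j t with rfl | hjt
    · linarith [h.1]
    · linarith [h.2 j hjs hjt]

/-- strict case -/
lemma nu_lt (ν : Measure (Fin K → ℝ)) {c : Fin K → ℝ} {g : (Fin K → ℝ) → ℝ}
    (hg : Integrable g volume) (hgpos : ∀ e, 0 < g e)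
    (hexch : ∀ σ : Equiv.Perm (Fin K), ∀ e, g (e ∘ σ) = g e)
    (hν : ∀ S : Set (Fin K → ℝ), MeasurableSet S → ν S = ∫⁻ e in S, ENNReal.ofReal (g e))
    {s t : Fin K} (hst : s ≠ t) (hc : c t < c s) :
    ν (choiceSet c t) < ν (choiceSet c s) := by
  classical
  have hνuniv : ν univ ≠ ⊤ := by
    rw [hν univ MeasurableSet.univ, setLIntegral_univ,
      ← ofReal_integral_eq_lintegral_ofReal hg
        (Filter.Eventually.of_forall fun e => (hgpos e).le)]
    exact ENNReal.ofReal_ne_top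
  have hfin : ∀ S : Set (Fin K → ℝ), ν S ≠ ⊤ :=
    fun S => ne_top_of_le_ne_top hνuniv (measure_mono (subset_univ S))
  -- B = swap-preimage of choiceSet c t
  set B : Set (Fin K → ℝ) := (fun e => e ∘ (Equiv.swap s t)) ⁻¹' (choiceSet c t) with hBdef
  have hBmeas : MeasurableSet B := by
    have : B = ⋂ j, ⋂ (_ : j ≠ t),
        {e : Fin K → ℝ | c j + e (Equiv.swap s t j) < c t + e (Equiv.swap s t t)} := by
      ext e; simp [hBdef, choiceSet]
    rw [this]
    exact MeasurableSet.iInter fun j => MeasurableSet.iInter fun _ =>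
      measurableSet_lt (measurable_const.add (measurable_pi_apply _))
        (measurable_const.add (measurable_pi_apply _))
  have hmemB : ∀ e, e ∈ B ↔
      (c s + e t < c t + e s ∧ ∀ j, j ≠ s → j ≠ t → c j + e j < c t + e s) := by
    intro e
    rw [hBdef, mem_preimage]
    exact preimage_swap_choiceSet c hst e
  have hνts : ν (choiceSet c t) = ν B :=
    nu_swap ν hexch hν (Equiv.swap s t) (measurableSet_choiceSet c t)
  -- B ⊆ choiceSet c s
  have hBsub : B ⊆ choiceSet c s := by
    intro e he
    rw [hmemB] at he
    intro j hjs
    rcases eq_or_ne j t with rfl | hjt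
    · linarith [he.1]
    · linarith [he.2 j hjs hjt]
  -- the open set O
  set O : Set (Fin K → ℝ) := choiceSet c s ∩ {e | c t + e s < c s + e t} with hOdef
  have hOopen : IsOpen O :=
    (isOpen_choiceSet c s).inter
      (isOpen_lt (continuous_const.add (continuous_apply s))
        (continuous_const.add (continuous_apply t)))
  have hOne : O.Nonempty := by
    have hKne : (Finset.univ : Finset (Fin K)).Nonempty := ⟨s, Finset.mem_univ s⟩
    set M : ℝ := 1 + Finset.univ.sup' hKne (fun j => c j - c s) with hM
    have hMj : ∀ j : Fin K, c j - c s < M := by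
      intro j
      have h1 : c j - c s ≤ Finset.univ.sup' hKne (fun j => c j - c s) :=
        Finset.le_sup' (fun j => c j - c s) (Finset.mem_univ j)
      rw [hM]; linarith
    set p : Fin K → ℝ := fun j => if j = s ∨ j = t then M else 0 with hp
    have hps : p s = M := by simp [hp]
    have hpt : p t = M := by simp [hp]
    refine ⟨p, ?_, ?_⟩
    · intro j hjs
      rcases eq_or_ne j t with rfl | hjt
      · show c j + p j < c s + p s
        rw [hpt, hps]; linarith
      · have hpj : p j = 0 := by simp [hp, hjs, hjt]
        show c j + p j < c s + p s
        rw [hpj, hps]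
        have := hMj j; linarith
    · show c t + p s < c s + p t
      rw [hps, hpt]; linarith
  have hOmeas : MeasurableSet O := hOopen.measurableSet
  have hOsub : O ⊆ choiceSet c s := inter_subset_left
  have hdisj : Disjoint B O := by
    rw [Set.disjoint_left]
    intro e heB heO
    rw [hmemB] at heB
    have := heO.2
    simp only [mem_setOf_eq] at this
    linarith [heB.1]
  have hOpos : 0 < ν O := by
    rw [hν O hOmeas]
    by_contra h
    push_neg at h
    have h0 : ∫⁻ e in O, ENNReal.ofReal (g e) ∂volume = 0 := le_antisymm h zero_le
    have hgm : AEMeasurable (fun e => ENNReal.ofReal (g e)) (volume.restrict O) :=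
      (hg.aestronglyMeasurable.aemeasurable.ennreal_ofReal).restrict
    have := (lintegral_eq_zero_iff' hgm).mp h0
    have hset : {e : Fin K → ℝ | ¬ ENNReal.ofReal (g e) = 0} = univ := by
      ext e
      simp [ENNReal.ofReal_eq_zero, not_le, hgpos e]
    rw [Filter.EventuallyEq, ae_iff] at this
    simp only [Pi.zero_apply] at this
    rw [hset, Measure.restrict_apply_univ] at this
    exact absurd this (hOopen.measure_pos volume hOne).ne'
  calc ν (choiceSet c t) = ν B := hνts
    _ < ν B + ν O := ENNReal.lt_add_right (hfin B) hOpos.ne'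
    _ = ν (B ∪ O) := (measure_union (hdisj) hOmeas).symm
    _ ≤ ν (choiceSet c s) := measure_mono (union_subset hBsub hOsub)

/-- the iff version -/
lemma nu_iff (ν : Measure (Fin K → ℝ)) {c : Fin K → ℝ} {g : (Fin K → ℝ) → ℝ}
    (hg : Integrable g volume) (hgpos : ∀ e, 0 < g e)
    (hexch : ∀ σ : Equiv.Perm (Fin K), ∀ e, g (e ∘ σ) = g e)
    (hν : ∀ S : Set (Fin K → ℝ), MeasurableSet S → ν S = ∫⁻ e in S, ENNReal.ofReal (g e))
    {s t : Fin K} (hst : s ≠ t) :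
    c t < c s ↔ ν (choiceSet c t) < ν (choiceSet c s) := by
  constructor
  · exact fun h => nu_lt ν hg hgpos hexch hν hst h
  · intro h
    rcases lt_trichotomy (c t) (c s) with h' | h' | h'
    · exact h'
    · exact absurd (nu_eq ν hexch hν hst h'.symm) h.ne'
    · exact absurd (nu_lt ν hg hgpos hexch hν hst.symm h') (lt_asymm h)



lemma rat_Iio_spanning : IsCountablySpanning (⋃ a : ℚ, {Iio (a : ℝ)}) := by
  refine ⟨fun n => Iio ((n : ℚ) : ℝ), fun n => mem_iUnion.mpr ⟨n, rfl⟩, ?_⟩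
  ext x
  simp only [mem_iUnion, mem_Iio, mem_univ, iff_true]
  obtain ⟨n, hn⟩ := exists_nat_gt x
  exact ⟨n, by push_cast; exact hn⟩

lemma generateFrom_boxes :
    @MeasurableSpace.generateFrom (Fin K → ℝ)
        (pi univ '' pi univ fun _ : Fin K => ⋃ a : ℚ, {Iio (a : ℝ)}) =
      MeasurableSpace.pi := by
  refine generateFrom_eq_pi (fun _ => ?_) (fun _ => rat_Iio_spanning)
  exact ((Real.borel_eq_generateFrom_Iio_rat).symm).trans ((BorelSpace.measurable_eq (α := ℝ))).symm

lemma isPiSystem_boxes :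
    IsPiSystem (pi univ '' pi univ fun _ : Fin K => ⋃ a : ℚ, {Iio (a : ℝ)}) := by
  refine IsPiSystem.pi fun _ => ?_
  rintro S hS T hT -
  simp only [mem_iUnion, mem_singleton_iff] at hS hT ⊢
  obtain ⟨a, rfl⟩ := hS
  obtain ⟨b, rfl⟩ := hT
  exact ⟨min a b, by rw [Iio_inter_Iio, Rat.cast_min]⟩

lemma measure_eq_lintegral_of_boxes (κμ : Measure (Fin K → ℝ)) [IsFiniteMeasure κμ]
    {g : (Fin K → ℝ) → ℝ}
    (hbox : ∀ r : Fin K → ℚ, κμ (univ.pi fun j => Iio ((r j : ℝ))) =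
        ∫⁻ e in univ.pi fun j => Iio ((r j : ℝ)), ENNReal.ofReal (g e))
    (huniv : κμ univ = ∫⁻ e, ENNReal.ofReal (g e)) :
    ∀ S : Set (Fin K → ℝ), MeasurableSet S → κμ S = ∫⁻ e in S, ENNReal.ofReal (g e) := by
  have hWD : κμ = volume.withDensity fun e => ENNReal.ofReal (g e) := by
    have hfin : IsFiniteMeasure (volume.withDensity fun e => ENNReal.ofReal (g e)) := by
      constructor
      rw [withDensity_apply _ MeasurableSet.univ, setLIntegral_univ, ← huniv]
      exact measure_lt_top κμ univ
    refine ext_of_generate_finite _ generateFrom_boxes.symm isPiSystem_boxes ?_ ?_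
    · rintro S ⟨sf, hsf, rfl⟩
      have hex : ∀ i : Fin K, ∃ a : ℚ, sf i = Iio (a : ℝ) := by
        intro i
        have := hsf i (mem_univ i)
        simpa only [mem_iUnion, mem_singleton_iff] using this
      choose r hr using hex
      have hSeq : univ.pi sf = univ.pi fun j => Iio ((r j : ℝ)) := by
        rw [show sf = fun j => Iio ((r j : ℝ)) from funext hr]
      rw [hSeq, hbox r, withDensity_apply _ (MeasurableSet.univ_pi fun _ => measurableSet_Iio)]
    · rw [withDensity_apply _ MeasurableSet.univ, setLIntegral_univ, huniv]
  intro S hS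
  rw [hWD, withDensity_apply _ hS]

end MultChoiceAux

open MultChoiceAux ProbabilityTheory

/-- In the multinomial choice model with utilities `U_j = X_j'β + ε_j`, if the
joint distribution of `(ε₁,…,ε_K)` conditional on `X` is exchangeable with an everywhere
positive joint density on `ℝ^K`, then for any pair of choices `s ≠ t`:
`X_s'β > X_t'β ⟺ P(Y = s|X) > P(Y = t|X)` almost surely, where `Y` maximizes utility. -/
theorem multinomial_rank_ordering {q K : ℕ} {Ω : Type*} [MeasurableSpace Ω]
    (μ : Measure Ω) [IsProbabilityMeasure μ]
    (X : Ω → Fin K → Fin q → ℝ) (hX : Measurable X)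
    (ε : Ω → Fin K → ℝ) (hε : Measurable ε)
    (β : Fin q → ℝ)
    -- `f x` is the joint density of `ε` conditional on `X = x`
    (f : (Fin K → Fin q → ℝ) → (Fin K → ℝ) → ℝ)
    -- everywhere positive
    (hfpos : ∀ x e, 0 < f x e)
    -- exchangeable
    (hexch : ∀ x (σ : Equiv.Perm (Fin K)) (e : Fin K → ℝ), f x (e ∘ σ) = f x e)
    -- conditional density identity: P(ε ∈ S | X) = ∫_S f(X, e) de
    (hdens : ∀ S : Set (Fin K → ℝ), MeasurableSet S →
      condExpGiven μ X (S.indicator 1 ∘ ε)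
        =ᵐ[μ] fun ω => ∫ e in S, f (X ω) e)
    -- `Y` is the utility-maximizing choice: U_k > U_j for all j ≠ Y
    (Y : Ω → Fin K)
    (hYmax : ∀ᵐ ω ∂μ, ∀ j : Fin K, j ≠ Y ω →
      (∑ i, X ω j i * β i) + ε ω j < (∑ i, X ω (Y ω) i * β i) + ε ω (Y ω)) :
    ∀ s t : Fin K, s ≠ t →
      ∀ᵐ ω ∂μ,
        ((∑ i, X ω t i * β i) < ∑ i, X ω s i * β i ↔
          condExpGiven μ X (fun ω' => if Y ω' = t then 1 else 0) ω <
            condExpGiven μ X (fun ω' => if Y ω' = s then 1 else 0) ω) := by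
  classical
  intro s t hst
  set cx : (Fin K → Fin q → ℝ) → Fin K → ℝ := fun x j => ∑ i, x j i * β i with hcx
  have hcxm : Measurable cx := by
    refine measurable_pi_lambda _ fun j => ?_
    refine Finset.measurable_sum _ fun i _ => ?_
    exact ((measurable_pi_apply i).comp (measurable_pi_apply j)).mul_const _
  have hm : MeasurableSpace.comap X inferInstance ≤ _ := hX.comap_le
  set κ := condDistrib ε X μ with hκdef
  -- Step A1: boxes
  have h1 : ∀ r : Fin K → ℚ, ∀ᵐ ω ∂μ,
      (κ (X ω) (univ.pi fun j => Iio ((r j : ℝ)))).toReal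
        = ∫ e in univ.pi fun j => Iio ((r j : ℝ)), f (X ω) e := by
    intro r
    have hSm : MeasurableSet (univ.pi fun j : Fin K => Iio ((r j : ℝ))) :=
      MeasurableSet.univ_pi fun _ => measurableSet_Iio
    have ha := condDistrib_ae_eq_condExp (μ := μ) hX hε hSm
    have hb := hdens _ hSm
    have hfun : (univ.pi fun j : Fin K => Iio ((r j : ℝ))).indicator (1 : (Fin K → ℝ) → ℝ) ∘ ε
        = (ε ⁻¹' (univ.pi fun j : Fin K => Iio ((r j : ℝ)))).indicator (fun _ => (1:ℝ)) := by
      funext ω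
      by_cases h : ε ω ∈ univ.pi fun j : Fin K => Iio ((r j : ℝ)) <;>
        simp [Set.indicator, h]
    rw [condExpGiven, hfun] at hb
    exact ha.trans hb
  -- Step A2: univ, total mass 1
  have h2 : ∀ᵐ ω ∂μ, ∫ e, f (X ω) e = 1 := by
    have hb := hdens univ MeasurableSet.univ
    have hfun : (univ : Set (Fin K → ℝ)).indicator (1 : (Fin K → ℝ) → ℝ) ∘ ε
        = fun _ => (1:ℝ) := by funext ω; simp
    rw [condExpGiven, hfun] at hb
    have hc : μ[(fun _ => (1:ℝ)) | MeasurableSpace.comap X inferInstance]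
        =ᵐ[μ] fun _ => (1:ℝ) := by
      rw [condExp_const hm (1:ℝ)]
    filter_upwards [hb.symm.trans hc] with ω hω
    rw [← hω, Measure.restrict_univ]
  -- Step A3: integrability
  have h3 : ∀ᵐ ω ∂μ, Integrable (f (X ω)) volume := by
    filter_upwards [h2] with ω hω
    by_contra hni
    rw [integral_undef hni] at hω
    norm_num at hω
  -- Step A4: kernel equals density measure
  have h4 : ∀ᵐ ω ∂μ, ∀ S : Set (Fin K → ℝ), MeasurableSet S →
      κ (X ω) S = ∫⁻ e in S, ENNReal.ofReal (f (X ω) e) := by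
    filter_upwards [ae_all_iff.mpr h1, h2, h3] with ω hbox huniv hint
    refine measure_eq_lintegral_of_boxes (κ (X ω)) ?_ ?_
    · intro r
      rw [← ENNReal.ofReal_toReal (measure_ne_top (κ (X ω)) _), hbox r,
        ofReal_integral_eq_lintegral_ofReal hint.integrableOn
          (Filter.Eventually.of_forall fun e => (hfpos (X ω) e).le)]
    · rw [measure_univ, ← ofReal_integral_eq_lintegral_ofReal hint
        (Filter.Eventually.of_forall fun e => (hfpos (X ω) e).le), huniv,
        ENNReal.ofReal_one]
  -- Step B: conditional choice probabilities
  have hcond : ∀ k : Fin K,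
      condExpGiven μ X (fun ω' => if Y ω' = k then 1 else 0)
        =ᵐ[μ] fun ω => (κ (X ω) (choiceSet (cx (X ω)) k)).toReal := by
    intro k
    set T : Set ((Fin K → Fin q → ℝ) × (Fin K → ℝ)) :=
      {p | ∀ j, j ≠ k → cx p.1 j + p.2 j < cx p.1 k + p.2 k} with hT
    have hTm : MeasurableSet T := by
      have hTeq : T = ⋂ j, ⋂ (_ : j ≠ k),
          {p : (Fin K → Fin q → ℝ) × (Fin K → ℝ) |
            cx p.1 j + p.2 j < cx p.1 k + p.2 k} := by
        ext p; simp [hT]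
      rw [hTeq]
      refine MeasurableSet.iInter fun j => MeasurableSet.iInter fun _ => ?_
      exact measurableSet_lt
        (((measurable_pi_apply j).comp (hcxm.comp measurable_fst)).add
          ((measurable_pi_apply j).comp measurable_snd))
        (((measurable_pi_apply k).comp (hcxm.comp measurable_fst)).add
          ((measurable_pi_apply k).comp measurable_snd))
    have hae : (fun ω' => if Y ω' = k then (1:ℝ) else 0)
        =ᵐ[μ] fun ω => T.indicator (fun _ => (1:ℝ)) (X ω, ε ω) := by
      filter_upwards [hYmax] with ω hω
      by_cases hYk : Y ω = k
      · rw [if_pos hYk, Set.indicator_of_mem]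
        intro j hj
        rw [← hYk] at hj ⊢
        exact hω j hj
      · rw [if_neg hYk, Set.indicator_of_notMem]
        intro hmem
        have h1' := hmem (Y ω) (fun h => hYk (by rw [← h]))
        have h2' := hω k (fun h => hYk h.symm)
        have : cx (X ω) k + ε ω k < cx (X ω) (Y ω) + ε ω (Y ω) := h2'
        linarith
    have hintT : Integrable (fun a => T.indicator (fun _ => (1:ℝ)) (X a, ε a)) μ := by
      have heq : (fun a => T.indicator (fun _ => (1:ℝ)) (X a, ε a))
          = ((fun a => (X a, ε a)) ⁻¹' T).indicator (fun _ => (1:ℝ)) := by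
        funext a
        by_cases h : (X a, ε a) ∈ T <;> simp [Set.indicator, h, mem_preimage]
      rw [heq]
      exact (integrable_const 1).indicator (hTm.preimage (hX.prodMk hε))
    have hstep := condExp_prod_ae_eq_integral_condDistrib (μ := μ) hX hε.aemeasurable
      (f := fun p => T.indicator (fun _ => (1:ℝ)) p)
      (measurable_const.indicator hTm).stronglyMeasurable hintT
    have hchain :=
      (condExp_congr_ae (m := MeasurableSpace.comap X inferInstance) hae).trans hstep
    refine hchain.trans (Filter.Eventually.of_forall fun ω => ?_)
    have hsec : (fun e => T.indicator (fun _ => (1:ℝ)) (X ω, e))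
        = (choiceSet (cx (X ω)) k).indicator (1 : (Fin K → ℝ) → ℝ) := by
      funext e
      by_cases h : e ∈ choiceSet (cx (X ω)) k
      · simp [Set.indicator, h, show (X ω, e) ∈ T from h]
      · simp [Set.indicator, h, show (X ω, e) ∉ T from h]
    simp only []
    rw [hsec, integral_indicator_one (measurableSet_choiceSet _ _)]
    rfl
  -- Step C: combine
  filter_upwards [h4, h3, hcond s, hcond t] with ω hκω hint hs' ht'
  rw [hs', ht']
  have hiff := nu_iff (κ (X ω)) (c := cx (X ω)) hint (hfpos (X ω)) (hexch (X ω)) hκω hst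
  show cx (X ω) t < cx (X ω) s ↔ _
  rw [hiff]
  exact (ENNReal.toReal_lt_toReal (measure_ne_top _ _) (measure_ne_top _ _)).symm
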